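/- Let R_{i,π} := QᵢᵀQᵢ + πI for i = 1,…,N with π > 0, and define g_π(z) = (1/(N(N−1))) ∑_{i<j} (zᵀR_{i,π}z / zᵀR_{j,π}z + zᵀR_{j,π}z / zᵀR_{i,π}z) for z ≠ 0. If z is a common eigenvector of all QᵢᵀQᵢ (i.e., R_{i,π}z = (σᵢ² + π)z for each i), then the gradient of g_π vanishes at z: ∇g_π(z) = 0. -/

import Mathlib

open Matrix BigOperators Finset

def projR (n : ℕ) (k : Fin n) : (Fin n → ℝ) →L[ℝ] ℝ := ContinuousLinearMap.proj k

@[simp] lemma projR_apply {n : ℕ} (k : Fin n) (w : Fin n → ℝ) : projR n k w = w k := rfl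

lemma quad_deriv {n : ℕ} (M : Matrix (Fin n) (Fin n) ℝ) (z : Fin n → ℝ)
    (a : ℝ) (hsym : Mᵀ = M) (hMz : M *ᵥ z = a • z) :
    HasFDerivAt (fun w : Fin n → ℝ => w ⬝ᵥ (M *ᵥ w))
      ((2 * a) • ∑ k, z k • projR n k) z := by
  have h1 : ∀ k, HasFDerivAt (fun w : Fin n → ℝ => w k * (∑ l, M k l * w l))
      (z k • (∑ l, M k l • projR n l) + (∑ l, M k l * z l) • projR n k) z := by
    intro k
    have hA : HasFDerivAt (fun w : Fin n → ℝ => w k) (projR n k) z :=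
      hasFDerivAt_apply k z
    have hB : HasFDerivAt (fun w : Fin n → ℝ => ∑ l, M k l * w l)
        (∑ l, M k l • projR n l) z := by
      apply HasFDerivAt.fun_sum
      intro l _
      exact (hasFDerivAt_apply l z).const_mul (M k l)
    exact hA.mul hB
  have hsum := HasFDerivAt.fun_sum (fun k (_ : k ∈ Finset.univ) => h1 k)
  have hfun : (fun w : Fin n → ℝ => ∑ k, w k * ∑ l, M k l * w l)
      = fun w : Fin n → ℝ => w ⬝ᵥ (M *ᵥ w) := by
    funext w; simp [dotProduct, mulVec]
  rw [hfun] at hsum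
  refine hsum.congr_fderiv (Eq.symm ?_)
  ext h
  simp only [ContinuousLinearMap.smul_apply, ContinuousLinearMap.sum_apply,
    ContinuousLinearMap.add_apply, projR_apply, smul_eq_mul]
  have hz1 : ∀ k, ∑ l, M k l * z l = a * z k := by
    intro k
    have := congrFun hMz k
    simpa [mulVec, dotProduct] using this
  have hz2 : ∀ l, ∑ k, M k l * z k = a * z l := by
    intro l
    have := congrFun hMz l
    rw [← hsym] at this
    simpa [mulVec, dotProduct, transpose_apply, mul_comm] using this
  have e1 : ∑ k, z k * ∑ l, M k l * h l = ∑ l, (a * z l) * h l := by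
    calc ∑ k, z k * ∑ l, M k l * h l = ∑ k, ∑ l, z k * (M k l * h l) := by
          simp [Finset.mul_sum]
      _ = ∑ l, ∑ k, z k * (M k l * h l) := Finset.sum_comm
      _ = ∑ l, (∑ k, M k l * z k) * h l := by
          congr 1; funext l
          rw [Finset.sum_mul]
          congr 1; funext k; ring
      _ = ∑ l, (a * z l) * h l := by simp [hz2]
  calc (2 * a) * ∑ k, z k * h k = ∑ k, ((a * z k) * h k + (a * z k) * h k) := by
        rw [Finset.mul_sum]; congr 1; funext k; ring
    _ = ∑ k, (z k * ∑ l, M k l * h l + (∑ l, M k l * z l) * h k) := by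
        have e2 : ∑ k, (∑ l, M k l * z l) * h k = ∑ k, (a * z k) * h k :=
          Finset.sum_congr rfl (fun k _ => by rw [hz1])
        rw [Finset.sum_add_distrib, Finset.sum_add_distrib, e1, e2]

theorem stmt19 {N n : ℕ} {m : Fin N → ℕ}
    (Q : ∀ i, Matrix (Fin (m i)) (Fin n) ℝ)
    (p : ℝ) (hp : 0 < p)
    (R : Fin N → Matrix (Fin n) (Fin n) ℝ)
    (hRdef : ∀ i, R i = (Q i)ᵀ * Q i + p • (1 : Matrix (Fin n) (Fin n) ℝ))
    (g : (Fin n → ℝ) → ℝ)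
    (hg : g = fun z => ((N : ℝ) * ((N : ℝ) - 1))⁻¹ *
      ∑ i, ∑ j ∈ Finset.Ioi i,
        ((z ⬝ᵥ ((R i) *ᵥ z)) / (z ⬝ᵥ ((R j) *ᵥ z)) +
          (z ⬝ᵥ ((R j) *ᵥ z)) / (z ⬝ᵥ ((R i) *ᵥ z))))
    (z : Fin n → ℝ) (hz : z ≠ 0)
    (σ2 : Fin N → ℝ)
    (hev : ∀ i, ((Q i)ᵀ * Q i) *ᵥ z = σ2 i • z) :
    fderiv ℝ g z = 0 := by
  set L : (Fin n → ℝ) →L[ℝ] ℝ := ∑ k, z k • projR n k with hL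
  set a : Fin N → ℝ := fun i => σ2 i + p with ha
  have hRsym : ∀ i, (R i)ᵀ = R i := by
    intro i
    rw [hRdef i]
    simp [transpose_add, transpose_mul, Matrix.transpose_smul]
  have hRz : ∀ i, R i *ᵥ z = a i • z := by
    intro i
    rw [hRdef i, add_mulVec, hev i, smul_mulVec, one_mulVec, ha, add_smul]
  have hder : ∀ i, HasFDerivAt (fun w : Fin n → ℝ => w ⬝ᵥ (R i *ᵥ w))
      ((2 * a i) • L) z := fun i => quad_deriv (R i) z (a i) (hRsym i) (hRz i)
  have hs : 0 < z ⬝ᵥ z := by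
    rcases lt_or_eq_of_le (Finset.sum_nonneg fun k _ => mul_self_nonneg (z k)) with h | h
    · exact h
    · exact absurd (dotProduct_self_eq_zero.mp h.symm) hz
  have hfz : ∀ i, z ⬝ᵥ (R i *ᵥ z) = a i * (z ⬝ᵥ z) := by
    intro i; rw [hRz i, dotProduct_smul, smul_eq_mul]
  have hpos : ∀ i, 0 < z ⬝ᵥ (R i *ᵥ z) := by
    intro i
    rw [hRdef i, add_mulVec, dotProduct_add, smul_mulVec, one_mulVec, dotProduct_smul]
    have h1 : 0 ≤ z ⬝ᵥ (((Q i)ᵀ * Q i) *ᵥ z) := by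
      rw [← mulVec_mulVec, dotProduct_mulVec, vecMul_transpose]
      exact Finset.sum_nonneg fun k _ => mul_self_nonneg _
    have h2 : 0 < p • (z ⬝ᵥ z) := by
      rw [smul_eq_mul]; exact mul_pos hp hs
    linarith
  -- each pair quotient has zero derivative
  have hdivz : ∀ i j, HasFDerivAt
      (fun w : Fin n → ℝ => (w ⬝ᵥ (R i *ᵥ w)) / (w ⬝ᵥ (R j *ᵥ w))) (0 : (Fin n → ℝ) →L[ℝ] ℝ) z := by
    intro i j
    have hcne : (z ⬝ᵥ (R j *ᵥ z)) ≠ 0 := ne_of_gt (hpos j)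
    have hinv := (hasFDerivAt_inv' (𝕜 := ℝ) (R := ℝ) hcne).comp z (hder j)
    have hmul := (hder i).mul hinv
    have hfe : (fun w : Fin n → ℝ => (w ⬝ᵥ (R i *ᵥ w)) / (w ⬝ᵥ (R j *ᵥ w)))
        = fun w : Fin n → ℝ => (w ⬝ᵥ (R i *ᵥ w)) * (Inv.inv ∘ fun w => w ⬝ᵥ (R j *ᵥ w)) w := by
      funext w; simp [div_eq_mul_inv, Function.comp]
    rw [hfe]
    refine hmul.congr_fderiv (Eq.symm ?_)
    ext h
    simp only [ContinuousLinearMap.zero_apply, ContinuousLinearMap.add_apply,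
      ContinuousLinearMap.smul_apply, ContinuousLinearMap.comp_apply,
      ContinuousLinearMap.neg_apply, ContinuousLinearMap.mulLeftRight_apply,
      Function.comp, smul_eq_mul]
    rw [hfz i, hfz j]
    have hajs : a j * (z ⬝ᵥ z) ≠ 0 := by rw [← hfz j]; exact hcne
    field_simp
    ring
  have hpair : ∀ i j, HasFDerivAt
      (fun w : Fin n → ℝ => (w ⬝ᵥ (R i *ᵥ w)) / (w ⬝ᵥ (R j *ᵥ w))
        + (w ⬝ᵥ (R j *ᵥ w)) / (w ⬝ᵥ (R i *ᵥ w))) (0 : (Fin n → ℝ) →L[ℝ] ℝ) z := by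
    intro i j
    simpa using (hdivz i j).fun_add (hdivz j i)
  have hsum : HasFDerivAt (fun w : Fin n → ℝ => ∑ i, ∑ j ∈ Finset.Ioi i,
      ((w ⬝ᵥ (R i *ᵥ w)) / (w ⬝ᵥ (R j *ᵥ w)) + (w ⬝ᵥ (R j *ᵥ w)) / (w ⬝ᵥ (R i *ᵥ w))))
      (0 : (Fin n → ℝ) →L[ℝ] ℝ) z := by
    have := HasFDerivAt.fun_sum (fun i (_ : i ∈ (Finset.univ : Finset (Fin N))) =>
      HasFDerivAt.fun_sum (fun j (_ : j ∈ Finset.Ioi i) => hpair i j))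
    simpa using this
  have hgd : HasFDerivAt g (0 : (Fin n → ℝ) →L[ℝ] ℝ) z := by
    rw [hg]
    simpa using hsum.const_mul (((N : ℝ) * ((N : ℝ) - 1))⁻¹)
  exact hgd.fderiv
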